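/- arXiv:2410.21654 — 5 statements merged into one kernel-verified Lean document; each statement's English description precedes it below -/
import Mathlib

section
/- Let A be a quasitriangular bialgebra over a field F with R-matrix R, let (ψ, J) be a twist pair for A, and let K be an invertible element of A satisfying Δ(K) = J⁻¹·(1⊗K)·R^ψ·(K⊗1). Then the generalized reflection equation holds in A⊗A: (K⊗1)·(R^ψ)₂₁·(1⊗K)·R = ((ψ⊗ψ)(R))₂₁·(1⊗K)·R^ψ·(K⊗1). -/
open TensorProduct

noncomputable section

variable (F : Type*) [Field F]

section BialgDefs

variable (A : Type*) [Ring A] [Bialgebra F A]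

/-- Conjugation by an invertible element, as an algebra automorphism. -/
def conjEquiv (g gi : A) (h1 : g * gi = 1) (h2 : gi * g = 1) : A ≃ₐ[F] A where
  toFun a := g * a * gi
  invFun a := gi * a * g
  left_inv a := by simp only [← mul_assoc]; rw [h2, one_mul, mul_assoc, h2, mul_one]
  right_inv a := by simp only [← mul_assoc]; rw [h1, one_mul, mul_assoc, h1, mul_one]
  map_mul' a b := by
    show g * (a * b) * gi = (g * a * gi) * (g * b * gi)
    simp only [mul_assoc]; rw [← mul_assoc gi g, h2, one_mul]
  map_add' a b := by
    show g * (a + b) * gi = g * a * gi + g * b * gi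
    rw [mul_add, add_mul]
  commutes' r := by
    show g * algebraMap F A r * gi = algebraMap F A r
    rw [← Algebra.commutes r g, mul_assoc, h1, mul_one]

/-- The coproduct of `A`, as an algebra map. -/
def cop : A →ₐ[F] A ⊗[F] A := Bialgebra.comulAlgHom F A

/-- The flip of the two tensor legs. -/
def flipT : (A ⊗[F] A) ≃ₐ[F] A ⊗[F] A := Algebra.TensorProduct.comm F A A

/-- The opposite coproduct. -/
def copOp : A →ₐ[F] A ⊗[F] A := (flipT F A).toAlgHom.comp (cop F A)

/-- `X ↦ X₁₂` on triple tensors. -/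
def i12 : (A ⊗[F] A) →ₐ[F] A ⊗[F] (A ⊗[F] A) :=
  Algebra.TensorProduct.map (AlgHom.id F A) Algebra.TensorProduct.includeLeft

/-- `X ↦ X₁₃` on triple tensors. -/
def i13 : (A ⊗[F] A) →ₐ[F] A ⊗[F] (A ⊗[F] A) :=
  Algebra.TensorProduct.map (AlgHom.id F A) Algebra.TensorProduct.includeRight

/-- `X ↦ X₂₃` on triple tensors. -/
def i23 : (A ⊗[F] A) →ₐ[F] A ⊗[F] (A ⊗[F] A) :=
  Algebra.TensorProduct.includeRight

/-- `Δ ⊗ id` landing in `A ⊗ (A ⊗ A)`. -/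
def cop12 : (A ⊗[F] A) →ₐ[F] A ⊗[F] (A ⊗[F] A) :=
  (Algebra.TensorProduct.assoc F F F A A A).toAlgHom.comp
    (Algebra.TensorProduct.map (cop F A) (AlgHom.id F A))

/-- `id ⊗ Δ`. -/
def cop23 : (A ⊗[F] A) →ₐ[F] A ⊗[F] (A ⊗[F] A) :=
  Algebra.TensorProduct.map (AlgHom.id F A) (cop F A)

/-- `ε ⊗ id`. -/
def counit2l : (A ⊗[F] A) →ₐ[F] A :=
  (Algebra.TensorProduct.lid F A).toAlgHom.comp
    (Algebra.TensorProduct.map (Bialgebra.counitAlgHom F A) (AlgHom.id F A))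

/-- `id ⊗ ε`. -/
def counit2r : (A ⊗[F] A) →ₐ[F] A :=
  (Algebra.TensorProduct.rid F F A).toAlgHom.comp
    (Algebra.TensorProduct.map (AlgHom.id F A) (Bialgebra.counitAlgHom F A))

/-- `ψ ⊗ φ` on `A ⊗ A`. -/
def mapT (ψ φ : A →ₐ[F] A) : (A ⊗[F] A) →ₐ[F] A ⊗[F] A := Algebra.TensorProduct.map ψ φ

/-- `R^ψ = (ψ ⊗ id)(R)`. -/
def rpsi (R : A ⊗[F] A) (ψ : A ≃ₐ[F] A) : A ⊗[F] A :=
  Algebra.TensorProduct.map ψ.toAlgHom (AlgHom.id F A) R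

/-- `A` is quasitriangular with R-matrix `R` (with inverse `Ri`). -/
structure IsQT (R Ri : A ⊗[F] A) : Prop where
  mulInv : R * Ri = 1
  invMul : Ri * R = 1
  intw : ∀ a : A, R * cop F A a * Ri = copOp F A a
  copL : cop12 F A R = i13 F A R * i23 F A R
  copR : cop23 F A R = i13 F A R * i12 F A R

/-- `(ψ, J)` is a twist pair (with `Ji` the inverse of `J`). -/
structure IsTwistPair (R Ri J Ji : A ⊗[F] A) (ψ : A ≃ₐ[F] A) : Prop where
  mulInv : J * Ji = 1
  invMul : Ji * J = 1
  cocycle : i12 F A J * cop12 F A J = i23 F A J * cop23 F A J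
  counitL : counit2l F A J = 1
  counitR : counit2r F A J = 1
  intw : ∀ a : A,
    mapT F A ψ.toAlgHom ψ.toAlgHom (copOp F A (ψ.symm a)) = J * cop F A a * Ji
  rrel : flipT F A (mapT F A ψ.toAlgHom ψ.toAlgHom R) = flipT F A J * R * Ji

/-- The image of `s ⊗ A` inside `A ⊗ A`, for a subset `s ⊆ A`. -/
def legSpan (s : Set A) : Submodule F (A ⊗[F] A) :=
  Submodule.span F {x : A ⊗[F] A | ∃ b ∈ s, ∃ a : A, x = b ⊗ₜ[F] a}

/-- `B` is a right coideal subalgebra of `A`. -/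
def IsRightCoideal (B : Subalgebra F A) : Prop :=
  ∀ b ∈ B, cop F A b ∈ legSpan F A (B : Set A)

/-- The tensor K-matrix `𝕂 = (R^ψ)₂₁ ⬝ (1 ⊗ K) ⬝ R`. -/
def tenK (R : A ⊗[F] A) (ψ : A ≃ₐ[F] A) (K : A) : A ⊗[F] A :=
  flipT F A (rpsi F A R ψ) * ((1 : A) ⊗ₜ[F] K) * R

/-- `(ψ, J, K)` is a cylindrical structure on `(A, B)`. -/
structure IsCylindrical (R Ri : A ⊗[F] A) (B : Subalgebra F A) (J Ji : A ⊗[F] A)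
    (ψ : A ≃ₐ[F] A) (K Kinv : A) : Prop where
  twist : IsTwistPair F A R Ri J Ji ψ
  kMulInv : K * Kinv = 1
  kInvMul : Kinv * K = 1
  intwB : ∀ b ∈ B, K * b * Kinv = ψ b
  support : tenK F A R ψ K ∈ legSpan F A (B : Set A)
  copK : cop F A K = Ji * (((1 : A) ⊗ₜ[F] K) * (rpsi F A R ψ * (K ⊗ₜ[F] (1 : A))))

end BialgDefs

section ModuleDefs

variable (A : Type*) [Ring A] [Bialgebra F A]

/-- Right partial transpose on `End V ⊗ End W`. -/
def pt2 (V W : Type*) [AddCommGroup V] [Module F V] [AddCommGroup W] [Module F W] :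
    (Module.End F V ⊗[F] Module.End F W) →ₗ[F]
      (Module.End F V ⊗[F] Module.End F (Module.Dual F W)) :=
  TensorProduct.map LinearMap.id (Module.Dual.transpose (R := F) (M := W) (M' := W))

/-- Identification `End V ⊗ End (W^∨∨) ≃ End V ⊗ End W` via the canonical iso `W ≅ W^∨∨`. -/
def ddIdent (V W : Type*) [AddCommGroup V] [Module F V] [AddCommGroup W] [Module F W]
    [FiniteDimensional F W] :
    (Module.End F V ⊗[F] Module.End F (Module.Dual F (Module.Dual F W))) →ₗ[F]
      (Module.End F V ⊗[F] Module.End F W) :=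
  TensorProduct.map LinearMap.id ((Module.evalEquiv F W).conj.symm).toLinearMap

/-- The right partial trace `A ⊗ End V → A`. -/
def trace2 (V : Type*) [AddCommGroup V] [Module F V] :
    (A ⊗[F] Module.End F V) →ₗ[F] A :=
  (TensorProduct.rid F A).toLinearMap.comp
    (TensorProduct.map LinearMap.id (LinearMap.trace F V))

/-- `T_{•,V}`: act with the second leg on `V`. -/
def actRight (V : Type*) [AddCommGroup V] [Module F V] (ρV : A →ₐ[F] Module.End F V) :
    (A ⊗[F] A) →ₐ[F] A ⊗[F] Module.End F V :=
  Algebra.TensorProduct.map (AlgHom.id F A) ρV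

/-- The boundary transfer matrix `Tr₂(𝕂₍•,V₎)`. -/
def transfer (V : Type*) [AddCommGroup V] [Module F V] (ρV : A →ₐ[F] Module.End F V)
    (T : A ⊗[F] A) : A :=
  trace2 F A V (actRight F A V ρV T)

/-- The module structure on `V ⊗ W` obtained from `Δ`. -/
def tensorRep (V W : Type*) [AddCommGroup V] [Module F V] [AddCommGroup W] [Module F W]
    (ρV : A →ₐ[F] Module.End F V) (ρW : A →ₐ[F] Module.End F W) :
    A →ₐ[F] Module.End F (V ⊗[F] W) :=
  (Module.endTensorEndAlgHom (R := F) (S := F) (A := F) (M := V) (N := W)).comp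
    ((Algebra.TensorProduct.map ρV ρW).comp (cop F A))

/-- `g` (with inverse `gi`) is a boundary gauge transformation for the twist pair `(ψ, J)`. -/
def IsBoundaryGauge (R J : A ⊗[F] A) (ψ : A ≃ₐ[F] A) (g gi : A)
    (hg1 : g * gi = 1) (hg2 : gi * g = 1) : Prop :=
  ∀ (V W : Type) [AddCommGroup V] [Module F V] [FiniteDimensional F V]
    [AddCommGroup W] [Module F W] [FiniteDimensional F W]
    (ρV : A →ₐ[F] Module.End F V) (ρW : A →ₐ[F] Module.End F W),
    let X := pt2 F V W
      ((Algebra.TensorProduct.map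
        (ρV.comp (ψ.trans (conjEquiv F A g gi hg1 hg2)).toAlgHom) ρW) R)
    IsUnit X ∧ IsUnit (pt2 F V (Module.Dual F W) (Ring.inverse X)) ∧
      (Algebra.TensorProduct.map ρV ρW) ((g ⊗ₜ[F] g) * J * cop F A gi) =
        ddIdent F V W (Ring.inverse (pt2 F V (Module.Dual F W) (Ring.inverse X)))

end ModuleDefs

/-- the coproduct identity for a basic K-matrix implies the
generalized reflection equation. -/
theorem statement0 {F A : Type*} [Field F] [Ring A] [Bialgebra F A]
    (R Ri : A ⊗[F] A) (hQT : IsQT F A R Ri)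
    (ψ : A ≃ₐ[F] A) (J Ji : A ⊗[F] A) (hTP : IsTwistPair F A R Ri J Ji ψ)
    (K Kinv : A) (hK1 : K * Kinv = 1) (hK2 : Kinv * K = 1)
    (hcop : cop F A K = Ji * (((1 : A) ⊗ₜ[F] K) * (rpsi F A R ψ * (K ⊗ₜ[F] (1 : A))))) :
    (K ⊗ₜ[F] (1 : A)) * flipT F A (rpsi F A R ψ) * ((1 : A) ⊗ₜ[F] K) * R =
      flipT F A (mapT F A ψ.toAlgHom ψ.toAlgHom R) * ((1 : A) ⊗ₜ[F] K) *
        rpsi F A R ψ * (K ⊗ₜ[F] (1 : A)) := by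
  have hfJ : flipT F A J * flipT F A Ji = 1 := by
    rw [← map_mul, hTP.mulInv, map_one]
  have h2 : R * cop F A K = copOp F A K * R := by
    calc R * cop F A K = R * cop F A K * (Ri * R) := by rw [hQT.invMul, mul_one]
      _ = (R * cop F A K * Ri) * R := by simp only [mul_assoc]
      _ = copOp F A K * R := by rw [hQT.intw K]
  have hop : copOp F A K
      = flipT F A Ji * ((K ⊗ₜ[F] (1 : A)) *
          (flipT F A (rpsi F A R ψ) * ((1 : A) ⊗ₜ[F] K))) := by
    show flipT F A (cop F A K) = _
    rw [hcop]
    simp only [map_mul, flipT, Algebra.TensorProduct.comm_tmul]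
  rw [hcop, hop] at h2
  simp only [mul_assoc] at h2
  rw [hTP.rrel]
  simp only [mul_assoc]
  rw [h2, ← mul_assoc (flipT F A J) (flipT F A Ji), hfJ, one_mul]

end
end

section
/- Let A be a quasitriangular bialgebra over a field F, B a right coideal subalgebra of A, and (ψ, J, K) a cylindrical structure on (A, B), with tensor K-matrix 𝕂 = (R^ψ)₂₁·(1⊗K)·R. Then for all b in B, 𝕂·Δ(b) = ((id⊗ψ)(Δ(b)))·𝕂 in A⊗A. -/
open TensorProduct

noncomputable section

variable (F : Type*) [Field F]

/-- the tensor K-matrix intertwines `Δ` and `(id ⊗ ψ) ∘ Δ` on `B`. -/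
theorem statement3 {F A : Type*} [Field F] [Ring A] [Bialgebra F A]
    (R Ri : A ⊗[F] A) (hQT : IsQT F A R Ri)
    (B : Subalgebra F A) (hB : IsRightCoideal F A B)
    (J Ji : A ⊗[F] A) (ψ : A ≃ₐ[F] A) (K Kinv : A)
    (hcyl : IsCylindrical F A R Ri B J Ji ψ K Kinv) :
    ∀ b ∈ B, tenK F A R ψ K * cop F A b =
      (mapT F A (AlgHom.id F A) ψ.toAlgHom) (cop F A b) * tenK F A R ψ K := by
  intro b hb
  have hKb : ∀ x ∈ B, K * x = ψ x * K := by
    intro x hx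
    have h := hcyl.intwB x hx
    calc K * x = K * x * Kinv * K := by rw [mul_assoc, hcyl.kInvMul, mul_one]
    _ = ψ x * K := by rw [h]
  -- commute (1 ⊗ K) past flips of elements of B ⊗ A
  have key : ∀ x ∈ legSpan F A (B : Set A),
      ((1:A) ⊗ₜ[F] K) * flipT F A x
        = flipT F A (mapT F A ψ.toAlgHom (AlgHom.id F A) x) * ((1:A) ⊗ₜ[F] K) := by
    intro x hx
    induction hx using Submodule.span_induction with
    | mem x hx =>
        obtain ⟨c, hc, a, rfl⟩ := hx
        simp only [flipT, mapT, Algebra.TensorProduct.comm_tmul,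
          Algebra.TensorProduct.map_tmul, Algebra.TensorProduct.tmul_mul_tmul,
          one_mul, mul_one, AlgHom.coe_id, id_eq, AlgEquiv.toAlgHom_eq_coe,
          AlgHom.coe_coe]
        rw [hKb c hc]
        rfl
    | zero => simp
    | add x y _ _ hx hy => simp only [map_add, mul_add, add_mul, hx, hy]
    | smul c x _ hx =>
        simp only [map_smul, mul_smul_comm, smul_mul_assoc, hx]
  have flipmap : ∀ x : A ⊗[F] A,
      flipT F A (mapT F A ψ.toAlgHom (AlgHom.id F A) (flipT F A x))
        = mapT F A (AlgHom.id F A) ψ.toAlgHom x := by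
    intro x
    induction x using TensorProduct.induction_on with
    | zero => simp
    | tmul a c => simp [flipT, mapT]
    | add x y hx hy => simp only [map_add, hx, hy]
  have hcopOp : copOp F A b = flipT F A (cop F A b) := rfl
  have hRΔ : R * cop F A b = flipT F A (cop F A b) * R := by
    have h := hQT.intw b
    calc R * cop F A b = R * cop F A b * Ri * R := by
          rw [mul_assoc, hQT.invMul, mul_one]
    _ = flipT F A (cop F A b) * R := by rw [h, hcopOp]
  have hrpsi : rpsi F A R ψ = mapT F A ψ.toAlgHom (AlgHom.id F A) R := rfl
  calc tenK F A R ψ K * cop F A b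
      = flipT F A (rpsi F A R ψ) * (((1:A) ⊗ₜ[F] K) * (R * cop F A b)) := by
        simp only [tenK, mul_assoc]
    _ = flipT F A (rpsi F A R ψ)
          * (((1:A) ⊗ₜ[F] K) * flipT F A (cop F A b) * R) := by
        rw [hRΔ, mul_assoc]
    _ = flipT F A (rpsi F A R ψ)
          * (flipT F A (mapT F A ψ.toAlgHom (AlgHom.id F A) (cop F A b))
            * ((1:A) ⊗ₜ[F] K) * R) := by
        rw [key _ (hB b hb)]
    _ = flipT F A (mapT F A ψ.toAlgHom (AlgHom.id F A) (R * cop F A b))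
          * (((1:A) ⊗ₜ[F] K) * R) := by
        rw [map_mul, map_mul, hrpsi]
        simp only [mul_assoc]
    _ = flipT F A (mapT F A ψ.toAlgHom (AlgHom.id F A) (flipT F A (cop F A b)))
          * (flipT F A (rpsi F A R ψ) * (((1:A) ⊗ₜ[F] K) * R)) := by
        rw [hRΔ, map_mul, map_mul, hrpsi, mul_assoc]
    _ = (mapT F A (AlgHom.id F A) ψ.toAlgHom) (cop F A b) * tenK F A R ψ K := by
        rw [flipmap]
        simp only [tenK, mul_assoc]

end
end

section
/- Let A be a quasitriangular bialgebra over a field F, B a right coideal subalgebra of A, and (ψ, J, K) a cylindrical structure on (A, B), with tensor K-matrix 𝕂 = (R^ψ)₂₁·(1⊗K)·R. Then (Δ⊗id)(𝕂) = (R^ψ)₃₂·𝕂₁₃·R₂₃ in A⊗A⊗A. -/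
open TensorProduct

noncomputable section

variable (F : Type*) [Field F]

section Statement4Aux

variable {F A : Type*} [Field F] [Ring A] [Bialgebra F A]

/-- Cyclic rotation on triple tensors: `a ⊗ (b ⊗ c) ↦ b ⊗ (c ⊗ a)`. -/
def rot3 : (A ⊗[F] (A ⊗[F] A)) →ₐ[F] A ⊗[F] (A ⊗[F] A) :=
  (Algebra.TensorProduct.assoc F F F A A A).toAlgHom.comp
    (Algebra.TensorProduct.comm F A (A ⊗[F] A)).toAlgHom

lemma rot3_tmul (a : A) (y : A ⊗[F] A) :
    (rot3 : (A ⊗[F] (A ⊗[F] A)) →ₐ[F] _) (a ⊗ₜ[F] y) =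
      (Algebra.TensorProduct.assoc F F F A A A) (y ⊗ₜ[F] a) := by
  simp [rot3]

lemma cop12_flipT (x : A ⊗[F] A) :
    cop12 F A (flipT F A x) = rot3 (cop23 F A x) := by
  induction x using TensorProduct.induction_on with
  | zero => simp
  | tmul a b => simp [cop12, cop23, flipT, rot3]
  | add u v hu hv => simp only [map_add, hu, hv]

lemma rot3_i13 (x : A ⊗[F] A) :
    rot3 (i13 F A x) = i23 F A (flipT F A x) := by
  induction x using TensorProduct.induction_on with
  | zero => simp
  | tmul a b => simp [i13, i23, flipT, rot3, Algebra.TensorProduct.one_def]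
  | add u v hu hv => simp only [map_add, hu, hv]

lemma rot3_i12 (x : A ⊗[F] A) :
    rot3 (i12 F A x) = i13 F A (flipT F A x) := by
  induction x using TensorProduct.induction_on with
  | zero => simp
  | tmul a b => simp [i12, i13, flipT, rot3, Algebra.TensorProduct.one_def]
  | add u v hu hv => simp only [map_add, hu, hv]

lemma rot3_i23 (x : A ⊗[F] A) :
    rot3 (i23 F A x) = i12 F A x := by
  induction x using TensorProduct.induction_on with
  | zero => simp
  | tmul a b => simp [i12, i23, rot3, Algebra.TensorProduct.one_def]
  | add u v hu hv => simp only [map_add, hu, hv]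

lemma cop23_mapPsi (ψ : A ≃ₐ[F] A) (x : A ⊗[F] A) :
    cop23 F A (Algebra.TensorProduct.map ψ.toAlgHom (AlgHom.id F A) x) =
      Algebra.TensorProduct.map ψ.toAlgHom (AlgHom.id F (A ⊗[F] A)) (cop23 F A x) := by
  induction x using TensorProduct.induction_on with
  | zero => simp
  | tmul a b => simp [cop23]
  | add u v hu hv => simp only [map_add, hu, hv]

lemma mapPsi_i13 (ψ : A ≃ₐ[F] A) (x : A ⊗[F] A) :
    Algebra.TensorProduct.map ψ.toAlgHom (AlgHom.id F (A ⊗[F] A)) (i13 F A x) =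
      i13 F A (Algebra.TensorProduct.map ψ.toAlgHom (AlgHom.id F A) x) := by
  induction x using TensorProduct.induction_on with
  | zero => simp
  | tmul a b => simp [i13]
  | add u v hu hv => simp only [map_add, hu, hv]

lemma mapPsi_i12 (ψ : A ≃ₐ[F] A) (x : A ⊗[F] A) :
    Algebra.TensorProduct.map ψ.toAlgHom (AlgHom.id F (A ⊗[F] A)) (i12 F A x) =
      i12 F A (Algebra.TensorProduct.map ψ.toAlgHom (AlgHom.id F A) x) := by
  induction x using TensorProduct.induction_on with
  | zero => simp
  | tmul a b => simp [i12]
  | add u v hu hv => simp only [map_add, hu, hv]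

lemma cop12_oneK (K : A) :
    cop12 F A ((1 : A) ⊗ₜ[F] K) = i13 F A ((1 : A) ⊗ₜ[F] K) := by
  simp [cop12, i13, Algebra.TensorProduct.one_def]

end Statement4Aux

/-- `(Δ ⊗ id)(𝕂) = (R^ψ)₃₂ ⬝ 𝕂₁₃ ⬝ R₂₃`. -/
theorem statement4 {F A : Type*} [Field F] [Ring A] [Bialgebra F A]
    (R Ri : A ⊗[F] A) (hQT : IsQT F A R Ri)
    (B : Subalgebra F A) (hB : IsRightCoideal F A B)
    (J Ji : A ⊗[F] A) (ψ : A ≃ₐ[F] A) (K Kinv : A)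
    (hcyl : IsCylindrical F A R Ri B J Ji ψ K Kinv) :
    cop12 F A (tenK F A R ψ K) =
      i23 F A (flipT F A (rpsi F A R ψ)) * i13 F A (tenK F A R ψ K) * i23 F A R := by
  have hrpsi : rpsi F A R ψ = Algebra.TensorProduct.map ψ.toAlgHom (AlgHom.id F A) R := rfl
  have hcop23 : cop23 F A (rpsi F A R ψ) =
      i13 F A (rpsi F A R ψ) * i12 F A (rpsi F A R ψ) := by
    rw [hrpsi, cop23_mapPsi, hQT.copR, map_mul, mapPsi_i13, mapPsi_i12]
  have key : cop12 F A (flipT F A (rpsi F A R ψ)) =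
      i23 F A (flipT F A (rpsi F A R ψ)) * i13 F A (flipT F A (rpsi F A R ψ)) := by
    rw [cop12_flipT, hcop23, map_mul, rot3_i13, rot3_i12]
  unfold tenK
  rw [map_mul, map_mul, map_mul, map_mul, key, cop12_oneK, hQT.copL]
  simp only [mul_assoc]

end
end

section
/- Let A be a quasitriangular bialgebra over a field F, B a right coideal subalgebra of A, and (ψ, J, K) a cylindrical structure on (A, B), with tensor K-matrix 𝕂 = (R^ψ)₂₁·(1⊗K)·R. Then (id⊗Δ)(𝕂) = (J⁻¹)₂₃·𝕂₁₃·(R^ψ)₂₃·𝕂₁₂ in A⊗A⊗A. Moreover (ε⊗id)(𝕂) = K. -/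
open TensorProduct

noncomputable section

variable (F : Type*) [Field F]

section Aux

variable (F : Type*) [Field F] (A : Type*) [Ring A] [Bialgebra F A]

/-- Swap of tensor legs 1 and 2 on `A ⊗ (A ⊗ A)`. -/
def sw12 : (A ⊗[F] (A ⊗[F] A)) ≃ₐ[F] A ⊗[F] (A ⊗[F] A) :=
  (Algebra.TensorProduct.assoc F F F A A A).symm.trans
    ((Algebra.TensorProduct.congr (Algebra.TensorProduct.comm F A A) AlgEquiv.refl).trans
      (Algebra.TensorProduct.assoc F F F A A A))

@[simp] lemma sw12_tmul (a b c : A) :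
    sw12 F A (a ⊗ₜ[F] (b ⊗ₜ[F] c)) = b ⊗ₜ[F] (a ⊗ₜ[F] c) := by
  simp [sw12]

/-- Swap of tensor legs 2 and 3 on `A ⊗ (A ⊗ A)`. -/
def sw23 : (A ⊗[F] (A ⊗[F] A)) ≃ₐ[F] A ⊗[F] (A ⊗[F] A) :=
  Algebra.TensorProduct.congr AlgEquiv.refl (Algebra.TensorProduct.comm F A A)

@[simp] lemma sw23_tmul (a b c : A) :
    sw23 F A (a ⊗ₜ[F] (b ⊗ₜ[F] c)) = a ⊗ₜ[F] (c ⊗ₜ[F] b) := by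
  simp [sw23]

/-- Swap of tensor legs 1 and 3 on `A ⊗ (A ⊗ A)`. -/
def sw13 : (A ⊗[F] (A ⊗[F] A)) ≃ₐ[F] A ⊗[F] (A ⊗[F] A) :=
  (sw23 F A).trans ((sw12 F A).trans (sw23 F A))

@[simp] lemma sw13_tmul (a b c : A) :
    sw13 F A (a ⊗ₜ[F] (b ⊗ₜ[F] c)) = c ⊗ₜ[F] (b ⊗ₜ[F] a) := by
  simp [sw13]

/-- Apply `ψ` on leg 2. -/
def psiMid (ψ : A ≃ₐ[F] A) : (A ⊗[F] (A ⊗[F] A)) →ₐ[F] A ⊗[F] (A ⊗[F] A) :=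
  Algebra.TensorProduct.map (AlgHom.id F A)
    (Algebra.TensorProduct.map ψ.toAlgHom (AlgHom.id F A))

@[simp] lemma psiMid_tmul (ψ : A ≃ₐ[F] A) (a b c : A) :
    psiMid F A ψ (a ⊗ₜ[F] (b ⊗ₜ[F] c)) = a ⊗ₜ[F] (ψ b ⊗ₜ[F] c) := by
  simp [psiMid]

/-- Apply `ψ` on legs 2 and 3. -/
def psi23M (ψ : A ≃ₐ[F] A) : (A ⊗[F] (A ⊗[F] A)) →ₐ[F] A ⊗[F] (A ⊗[F] A) :=
  Algebra.TensorProduct.map (AlgHom.id F A)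
    (Algebra.TensorProduct.map ψ.toAlgHom ψ.toAlgHom)

@[simp] lemma psi23M_tmul (ψ : A ≃ₐ[F] A) (a b c : A) :
    psi23M F A ψ (a ⊗ₜ[F] (b ⊗ₜ[F] c)) = a ⊗ₜ[F] (ψ b ⊗ₜ[F] ψ c) := by
  simp [psi23M]

@[simp] lemma rpsi_zero (ψ : A ≃ₐ[F] A) : rpsi F A 0 ψ = 0 := by simp [rpsi]

@[simp] lemma rpsi_add (ψ : A ≃ₐ[F] A) (x y : A ⊗[F] A) :
    rpsi F A (x + y) ψ = rpsi F A x ψ + rpsi F A y ψ := by simp [rpsi]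


lemma sw12_i13 (X : A ⊗[F] A) : sw12 F A (i13 F A X) = i23 F A X := by
  induction X using TensorProduct.induction_on with
  | zero => simp
  | tmul a b => simp [i13, i23]
  | add x y hx hy => simp only [rpsi_add, map_add, hx, hy]

lemma sw12_i23 (X : A ⊗[F] A) : sw12 F A (i23 F A X) = i13 F A X := by
  induction X using TensorProduct.induction_on with
  | zero => simp
  | tmul a b => simp [i13, i23]
  | add x y hx hy => simp only [rpsi_add, map_add, hx, hy]

lemma i12_eq_assoc (X : A ⊗[F] A) :
    i12 F A X = (Algebra.TensorProduct.assoc F F F A A A) (X ⊗ₜ[F] (1 : A)) := by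
  induction X using TensorProduct.induction_on with
  | zero => simp [TensorProduct.zero_tmul]
  | tmul a b => simp [i12]
  | add x y hx hy => simp only [map_add, TensorProduct.add_tmul, hx, hy]

lemma assoc_mul_left (Y u : A ⊗[F] A) (b : A) :
    i12 F A Y * (Algebra.TensorProduct.assoc F F F A A A) (u ⊗ₜ[F] b) =
      (Algebra.TensorProduct.assoc F F F A A A) ((Y * u) ⊗ₜ[F] b) := by
  rw [i12_eq_assoc, ← map_mul, Algebra.TensorProduct.tmul_mul_tmul, one_mul]

lemma assoc_mul_right (u Y : A ⊗[F] A) (b : A) :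
    (Algebra.TensorProduct.assoc F F F A A A) (u ⊗ₜ[F] b) * i12 F A Y =
      (Algebra.TensorProduct.assoc F F F A A A) ((u * Y) ⊗ₜ[F] b) := by
  rw [i12_eq_assoc, ← map_mul, Algebra.TensorProduct.tmul_mul_tmul, mul_one]

lemma sw12_assoc (u : A ⊗[F] A) (b : A) :
    sw12 F A ((Algebra.TensorProduct.assoc F F F A A A) (u ⊗ₜ[F] b)) =
      (Algebra.TensorProduct.assoc F F F A A A) ((flipT F A u) ⊗ₜ[F] b) := by
  induction u using TensorProduct.induction_on with
  | zero => simp [TensorProduct.zero_tmul]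
  | tmul x y => simp [flipT]
  | add x y hx hy =>
      simp only [map_add, TensorProduct.add_tmul, hx, hy]

lemma cop12_apply (a b : A) :
    cop12 F A (a ⊗ₜ[F] b) = (Algebra.TensorProduct.assoc F F F A A A) ((cop F A a) ⊗ₜ[F] b) := by
  simp [cop12]

lemma sw13_assoc (u : A ⊗[F] A) (b : A) :
    sw13 F A ((Algebra.TensorProduct.assoc F F F A A A) (u ⊗ₜ[F] b)) =
      b ⊗ₜ[F] (flipT F A u) := by
  induction u using TensorProduct.induction_on with
  | zero => simp [TensorProduct.zero_tmul]
  | tmul x y => simp [flipT]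
  | add x y hx hy =>
      simp only [map_add, TensorProduct.add_tmul, TensorProduct.tmul_add, hx, hy]

lemma sw12_cop12 (R Ri : A ⊗[F] A) (h : ∀ a : A, R * cop F A a * Ri = copOp F A a)
    (X : A ⊗[F] A) :
    sw12 F A (cop12 F A X) = i12 F A R * cop12 F A X * i12 F A Ri := by
  induction X using TensorProduct.induction_on with
  | zero => simp
  | tmul a b =>
      rw [cop12_apply, sw12_assoc, assoc_mul_left, assoc_mul_right, h a]
      rfl
  | add x y hx hy => simp only [rpsi_add, map_add, mul_add, add_mul, hx, hy]

lemma ybe (R Ri : A ⊗[F] A) (hQT : IsQT F A R Ri) :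
    i12 F A R * i13 F A R * i23 F A R = i23 F A R * i13 F A R * i12 F A R := by
  have e2 := sw12_cop12 F A R Ri hQT.intw R
  rw [hQT.copL, map_mul, sw12_i13, sw12_i23] at e2
  have e3 : i23 F A R * i13 F A R * i12 F A R =
      i12 F A R * (i13 F A R * i23 F A R) * (i12 F A Ri * i12 F A R) := by
    rw [e2, mul_assoc (i12 F A R * (i13 F A R * i23 F A R)) _ _]
  rw [← map_mul, hQT.invMul, map_one, mul_one, ← mul_assoc] at e3
  exact e3.symm

lemma phi_i12 (ψ : A ≃ₐ[F] A) (X : A ⊗[F] A) :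
    psiMid F A ψ (sw12 F A (i12 F A X)) = i12 F A (flipT F A (rpsi F A X ψ)) := by
  induction X using TensorProduct.induction_on with
  | zero => simp
  | tmul a b => simp [i12, rpsi, flipT]
  | add x y hx hy => simp only [rpsi_add, map_add, hx, hy]

lemma phi_i13 (ψ : A ≃ₐ[F] A) (X : A ⊗[F] A) :
    psiMid F A ψ (sw12 F A (i13 F A X)) = i23 F A (rpsi F A X ψ) := by
  induction X using TensorProduct.induction_on with
  | zero => simp
  | tmul a b => simp [i13, i23, rpsi]
  | add x y hx hy => simp only [rpsi_add, map_add, hx, hy]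

lemma phi_i23 (ψ : A ≃ₐ[F] A) (X : A ⊗[F] A) :
    psiMid F A ψ (sw12 F A (i23 F A X)) = i13 F A X := by
  induction X using TensorProduct.induction_on with
  | zero => simp
  | tmul a b => simp [i13, i23]
  | add x y hx hy => simp only [rpsi_add, map_add, hx, hy]

lemma tybe (R Ri : A ⊗[F] A) (hQT : IsQT F A R Ri) (ψ : A ≃ₐ[F] A) :
    i12 F A (flipT F A (rpsi F A R ψ)) * i23 F A (rpsi F A R ψ) * i13 F A R =
      i13 F A R * i23 F A (rpsi F A R ψ) * i12 F A (flipT F A (rpsi F A R ψ)) := by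
  have h := congrArg (fun t => psiMid F A ψ (sw12 F A t)) (ybe F A R Ri hQT)
  simpa only [map_mul, phi_i12, phi_i13, phi_i23] using h

lemma th_i13 (ψ : A ≃ₐ[F] A) (X : A ⊗[F] A) :
    psi23M F A ψ (sw13 F A (i13 F A X)) = i13 F A (flipT F A (rpsi F A X ψ)) := by
  induction X using TensorProduct.induction_on with
  | zero => simp
  | tmul a b => simp [i13, rpsi, flipT]
  | add x y hx hy => simp only [rpsi_add, map_add, hx, hy]

lemma th_i23 (ψ : A ≃ₐ[F] A) (X : A ⊗[F] A) :
    psi23M F A ψ (sw13 F A (i23 F A X)) = i12 F A (flipT F A (rpsi F A X ψ)) := by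
  induction X using TensorProduct.induction_on with
  | zero => simp
  | tmul a b => simp [i12, i23, rpsi, flipT]
  | add x y hx hy => simp only [rpsi_add, map_add, hx, hy]

lemma i23_mul_tmul (Y : A ⊗[F] A) (b : A) (Z : A ⊗[F] A) :
    i23 F A Y * (b ⊗ₜ[F] Z) = b ⊗ₜ[F] (Y * Z) := by
  show ((1 : A) ⊗ₜ[F] Y) * (b ⊗ₜ[F] Z) = b ⊗ₜ[F] (Y * Z)
  rw [Algebra.TensorProduct.tmul_mul_tmul, one_mul]

lemma tmul_mul_i23 (b : A) (Z Y : A ⊗[F] A) :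
    (b ⊗ₜ[F] Z) * i23 F A Y = b ⊗ₜ[F] (Z * Y) := by
  show (b ⊗ₜ[F] Z) * ((1 : A) ⊗ₜ[F] Y) = b ⊗ₜ[F] (Z * Y)
  rw [Algebra.TensorProduct.tmul_mul_tmul, mul_one]

lemma psi23M_tmul2 (ψ : A ≃ₐ[F] A) (b : A) (Z : A ⊗[F] A) :
    psi23M F A ψ (b ⊗ₜ[F] Z) =
      b ⊗ₜ[F] (mapT F A ψ.toAlgHom ψ.toAlgHom Z) := by
  simp [psi23M, mapT]

lemma flipT_rpsi_tmul (ψ : A ≃ₐ[F] A) (a b : A) :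
    flipT F A (rpsi F A (a ⊗ₜ[F] b) ψ) = b ⊗ₜ[F] ψ a := by
  simp [flipT, rpsi]

lemma cop23_tmul (a b : A) :
    cop23 F A (a ⊗ₜ[F] b) = a ⊗ₜ[F] (cop F A b) := by
  simp [cop23]

lemma lemB1 (R Ri J Ji : A ⊗[F] A) (ψ : A ≃ₐ[F] A)
    (hT : IsTwistPair F A R Ri J Ji ψ) (X : A ⊗[F] A) :
    cop23 F A (flipT F A (rpsi F A X ψ)) =
      i23 F A Ji * psi23M F A ψ (sw13 F A (cop12 F A X)) * i23 F A J := by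
  induction X using TensorProduct.induction_on with
  | zero => simp
  | tmul a b =>
      rw [cop12_apply, sw13_assoc, psi23M_tmul2, i23_mul_tmul, tmul_mul_i23,
        flipT_rpsi_tmul, cop23_tmul]
      congr 1
      have h4 := hT.intw (ψ a)
      rw [ψ.symm_apply_apply] at h4
      rw [show flipT F A (cop F A a) = copOp F A a from rfl, h4]
      simp only [← mul_assoc]
      rw [hT.invMul, one_mul, mul_assoc, hT.invMul, mul_one]
  | add x y hx hy => simp only [rpsi_add, map_add, mul_add, add_mul, hx, hy]

lemma copW (R Ri J Ji : A ⊗[F] A) (ψ : A ≃ₐ[F] A)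
    (hQT : IsQT F A R Ri) (hT : IsTwistPair F A R Ri J Ji ψ) :
    cop23 F A (flipT F A (rpsi F A R ψ)) =
      i23 F A Ji *
        (i13 F A (flipT F A (rpsi F A R ψ)) * i12 F A (flipT F A (rpsi F A R ψ))) *
        i23 F A J := by
  rw [lemB1 F A R Ri J Ji ψ hT R, hQT.copL, map_mul, map_mul, th_i13, th_i23]

lemma comm1 (X : A ⊗[F] A) (k : A) :
    i12 F A X * i23 F A ((1 : A) ⊗ₜ[F] k) = i23 F A ((1 : A) ⊗ₜ[F] k) * i12 F A X := by
  induction X using TensorProduct.induction_on with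
  | zero => simp
  | tmul a b => simp [i12, i23]
  | add x y hx hy => simp only [rpsi_add, map_add, mul_add, add_mul, hx, hy]

lemma comm2 (X : A ⊗[F] A) (k : A) :
    i13 F A X * i23 F A (k ⊗ₜ[F] (1 : A)) = i23 F A (k ⊗ₜ[F] (1 : A)) * i13 F A X := by
  induction X using TensorProduct.induction_on with
  | zero => simp
  | tmul a b => simp [i13, i23]
  | add x y hx hy => simp only [rpsi_add, map_add, mul_add, add_mul, hx, hy]

lemma counit2l_tmul (a b : A) :
    counit2l F A (a ⊗ₜ[F] b) = Coalgebra.counit (R := F) a • b := by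
  simp [counit2l]

lemma counit2r_tmul (a b : A) :
    counit2r F A (a ⊗ₜ[F] b) = Coalgebra.counit (R := F) b • a := by
  simp [counit2r]

lemma counit2l_cop (a : A) : counit2l F A (cop F A a) = a := by
  have key : ∀ t : A ⊗[F] A, counit2l F A t =
      TensorProduct.lid F A ((LinearMap.rTensor A (Coalgebra.counit (R := F))) t) := by
    intro t
    induction t using TensorProduct.induction_on with
    | zero => simp
    | tmul x y => simp [counit2l_tmul]
    | add x y hx hy => simp only [rpsi_add, map_add, hx, hy]
  rw [key, show cop F A a = Coalgebra.comul (R := F) a from rfl,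
    Coalgebra.rTensor_counit_comul]
  simp

lemma counit2r_cop (a : A) : counit2r F A (cop F A a) = a := by
  have key : ∀ t : A ⊗[F] A, counit2r F A t =
      TensorProduct.rid F A ((LinearMap.lTensor A (Coalgebra.counit (R := F))) t) := by
    intro t
    induction t using TensorProduct.induction_on with
    | zero => simp
    | tmul x y => simp [counit2r_tmul]
    | add x y hx hy => simp only [rpsi_add, map_add, hx, hy]
  rw [key, show cop F A a = Coalgebra.comul (R := F) a from rfl,
    Coalgebra.lTensor_counit_comul]
  simp

/-- `ε ⊗ id ⊗ id` on triple tensors. -/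
def E1h : (A ⊗[F] (A ⊗[F] A)) →ₐ[F] A ⊗[F] A :=
  (Algebra.TensorProduct.lid F (A ⊗[F] A)).toAlgHom.comp
    (Algebra.TensorProduct.map (Bialgebra.counitAlgHom F A) (AlgHom.id F (A ⊗[F] A)))

@[simp] lemma E1h_tmul (a : A) (Z : A ⊗[F] A) :
    E1h F A (a ⊗ₜ[F] Z) = Coalgebra.counit (R := F) a • Z := by
  simp [E1h]

lemma E1h_assoc (u : A ⊗[F] A) (b : A) :
    E1h F A ((Algebra.TensorProduct.assoc F F F A A A) (u ⊗ₜ[F] b)) =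
      (counit2l F A u) ⊗ₜ[F] b := by
  induction u using TensorProduct.induction_on with
  | zero => simp [TensorProduct.zero_tmul]
  | tmul x y =>
      simp [counit2l_tmul, TensorProduct.smul_tmul']
  | add x y hx hy =>
      simp only [map_add, TensorProduct.add_tmul, hx, hy]

lemma E1h_cop12 (X : A ⊗[F] A) : E1h F A (cop12 F A X) = X := by
  induction X using TensorProduct.induction_on with
  | zero => simp
  | tmul a b => rw [cop12_apply, E1h_assoc, counit2l_cop]
  | add x y hx hy => simp only [rpsi_add, map_add, hx, hy]

lemma E1h_i13 (X : A ⊗[F] A) :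
    E1h F A (i13 F A X) = (1 : A) ⊗ₜ[F] (counit2l F A X) := by
  induction X using TensorProduct.induction_on with
  | zero => simp
  | tmul a b => simp [i13, counit2l_tmul, TensorProduct.tmul_smul]
  | add x y hx hy => simp only [map_add, TensorProduct.tmul_add, hx, hy]

lemma E1h_i23 (X : A ⊗[F] A) : E1h F A (i23 F A X) = X := by
  show E1h F A ((1 : A) ⊗ₜ[F] X) = X
  simp

lemma counit2l_R (R Ri : A ⊗[F] A) (hQT : IsQT F A R Ri) :
    counit2l F A R = 1 := by
  have h := congrArg (E1h F A) hQT.copL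
  rw [E1h_cop12, map_mul, E1h_i13, E1h_i23] at h
  have h2 : (1 : A ⊗[F] A) = (1 : A) ⊗ₜ[F] (counit2l F A R) := by
    have h3 := congrArg (fun t => t * Ri) h
    simpa only [mul_assoc, hQT.mulInv, mul_one] using h3
  have h4 := congrArg (counit2l F A) h2
  rw [map_one, counit2l_tmul] at h4
  simpa using h4.symm

/-- `id ⊗ id ⊗ ε` on triple tensors. -/
def E3h : (A ⊗[F] (A ⊗[F] A)) →ₐ[F] A ⊗[F] A :=
  Algebra.TensorProduct.map (AlgHom.id F A) (counit2r F A)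

lemma E3h_cop23 (X : A ⊗[F] A) : E3h F A (cop23 F A X) = X := by
  induction X using TensorProduct.induction_on with
  | zero => simp
  | tmul a b => simp [E3h, cop23, counit2r_cop]
  | add x y hx hy => simp only [rpsi_add, map_add, hx, hy]

lemma E3h_i13 (X : A ⊗[F] A) :
    E3h F A (i13 F A X) = (counit2r F A X) ⊗ₜ[F] (1 : A) := by
  induction X using TensorProduct.induction_on with
  | zero => simp
  | tmul a b =>
      simp [E3h, i13, counit2r_tmul, TensorProduct.smul_tmul', TensorProduct.tmul_smul]
  | add x y hx hy => simp only [map_add, TensorProduct.add_tmul, hx, hy]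

lemma E3h_i12 (X : A ⊗[F] A) : E3h F A (i12 F A X) = X := by
  induction X using TensorProduct.induction_on with
  | zero => simp
  | tmul a b => simp [E3h, i12, counit2r_tmul]
  | add x y hx hy => simp only [rpsi_add, map_add, hx, hy]

lemma counit2r_R (R Ri : A ⊗[F] A) (hQT : IsQT F A R Ri) :
    counit2r F A R = 1 := by
  have h := congrArg (E3h F A) hQT.copR
  rw [E3h_cop23, map_mul, E3h_i13, E3h_i12] at h
  have h2 : (1 : A ⊗[F] A) = (counit2r F A R) ⊗ₜ[F] (1 : A) := by
    have h3 := congrArg (fun t => t * Ri) h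
    simpa only [mul_assoc, hQT.mulInv, mul_one] using h3
  have h4 := congrArg (counit2r F A) h2
  rw [map_one, counit2r_tmul] at h4
  simpa using h4.symm

lemma counit2l_flip (X : A ⊗[F] A) :
    counit2l F A (flipT F A X) = counit2r F A X := by
  induction X using TensorProduct.induction_on with
  | zero => simp
  | tmul a b => simp [flipT, counit2l_tmul, counit2r_tmul]
  | add x y hx hy => simp only [rpsi_add, map_add, hx, hy]

lemma counit2r_rpsi (ψ : A ≃ₐ[F] A) (X : A ⊗[F] A) :
    counit2r F A (rpsi F A X ψ) = ψ (counit2r F A X) := by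
  induction X using TensorProduct.induction_on with
  | zero => simp
  | tmul a b => simp [rpsi, counit2r_tmul]
  | add x y hx hy => simp only [rpsi_add, map_add, hx, hy]

end Aux


/-- `(id ⊗ Δ)(𝕂) = (J⁻¹)₂₃ ⬝ 𝕂₁₃ ⬝ (R^ψ)₂₃ ⬝ 𝕂₁₂` and `(ε ⊗ id)(𝕂) = K`. -/
theorem statement5 {F A : Type*} [Field F] [Ring A] [Bialgebra F A]
    (R Ri : A ⊗[F] A) (hQT : IsQT F A R Ri)
    (B : Subalgebra F A) (hB : IsRightCoideal F A B)
    (J Ji : A ⊗[F] A) (ψ : A ≃ₐ[F] A) (K Kinv : A)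
    (hcyl : IsCylindrical F A R Ri B J Ji ψ K Kinv) :
    cop23 F A (tenK F A R ψ K) =
      i23 F A Ji * i13 F A (tenK F A R ψ K) * i23 F A (rpsi F A R ψ) *
        i12 F A (tenK F A R ψ K) ∧
    counit2l F A (tenK F A R ψ K) = K := by
  obtain ⟨hT, hK1, hK2, hint, hsup, hcopK⟩ := hcyl
  have htenK : tenK F A R ψ K =
      flipT F A (rpsi F A R ψ) * ((1 : A) ⊗ₜ[F] K) * R := rfl
  constructor
  · have hW := copW F A R Ri J Ji ψ hQT hT
    have hcop1K : cop23 F A ((1 : A) ⊗ₜ[F] K) = i23 F A (cop F A K) := by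
      simp [cop23, i23]
    have h13K : i13 F A ((1 : A) ⊗ₜ[F] K) = i23 F A ((1 : A) ⊗ₜ[F] K) := by
      simp [i13, i23]
    have h12K : i12 F A ((1 : A) ⊗ₜ[F] K) = i23 F A (K ⊗ₜ[F] (1 : A)) := by
      simp [i12, i23]
    have hJJi : ∀ x : A ⊗[F] (A ⊗[F] A), i23 F A J * (i23 F A Ji * x) = x := by
      intro x
      rw [← mul_assoc, ← map_mul, hT.mulInv, map_one, one_mul]
    have hc1 : ∀ x : A ⊗[F] (A ⊗[F] A),
        i12 F A (flipT F A (rpsi F A R ψ)) * (i23 F A ((1 : A) ⊗ₜ[F] K) * x) =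
          i23 F A ((1 : A) ⊗ₜ[F] K) * (i12 F A (flipT F A (rpsi F A R ψ)) * x) := by
      intro x
      rw [← mul_assoc, comm1, mul_assoc]
    have hc2 : ∀ x : A ⊗[F] (A ⊗[F] A),
        i23 F A (K ⊗ₜ[F] (1 : A)) * (i13 F A R * x) =
          i13 F A R * (i23 F A (K ⊗ₜ[F] (1 : A)) * x) := by
      intro x
      rw [← mul_assoc, ← comm2, mul_assoc]
    have hty : ∀ x : A ⊗[F] (A ⊗[F] A),
        i12 F A (flipT F A (rpsi F A R ψ)) * (i23 F A (rpsi F A R ψ) * (i13 F A R * x)) =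
          i13 F A R * (i23 F A (rpsi F A R ψ) * (i12 F A (flipT F A (rpsi F A R ψ)) * x)) := by
      intro x
      simp only [← mul_assoc]
      rw [tybe F A R Ri hQT ψ]
    rw [htenK]
    simp only [map_mul]
    rw [hcop1K, hcopK, hW, hQT.copR, h13K, h12K]
    simp only [map_mul]
    simp only [mul_assoc]
    rw [hJJi, hc1, hc2, hty]
  · rw [htenK, map_mul, map_mul, counit2l_flip, counit2r_rpsi,
      counit2r_R F A R Ri hQT, counit2l_R F A R Ri hQT, counit2l_tmul]
    simp


end
end

section
/- Let A be a Hopf algebra over a field F with bijective antipode S, quasitriangular with R-matrix R, and let D be a sovereign element of A. Then for every pair of finite-dimensional A-modules V and W, the partial transpose ((R_{V,W})⁻¹)^{t₂} is invertible in End_F(V)⊗End_F(W^∨), and ((((R_{V,W})⁻¹)^{t₂})⁻¹)^{t₂} = ((1⊗D⁻¹)·R·(1⊗D))_{V,W}, under the canonical identification End_F(W^∨∨) ≅ End_F(W). -/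
open TensorProduct

noncomputable section



variable (F : Type*) [Field F]

section St10Section

namespace St10

open Coalgebra HopfAlgebra

variable {F : Type*} [Field F] {A : Type*} [Ring A] [HopfAlgebra F A]

/-- Product of two Sweedler representations. -/
def mulRepr {ι κ : Type*} (x y : A) (rx : Coalgebra.Repr F x ι) (ry : Coalgebra.Repr F y κ) :
    Coalgebra.Repr F (x * y) (ι × κ) where
  index := rx.index ×ˢ ry.index
  left p := rx.left p.1 * ry.left p.2
  right p := rx.right p.1 * ry.right p.2
  eq := by
    rw [Finset.sum_product, Bialgebra.comul_mul, ← rx.eq, ← ry.eq, Finset.sum_mul_sum]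
    simp_rw [Algebra.TensorProduct.tmul_mul_tmul]

lemma csumL {ι : Type*} (x : A) (r : Coalgebra.Repr F x ι) :
    ∑ i ∈ r.index, Coalgebra.counit (R := F) (r.right i) • r.left i = x := by
  have h := congrArg (TensorProduct.rid F A) (Coalgebra.sum_tmul_counit_eq (R := F) r)
  rw [map_sum] at h
  simp only [TensorProduct.rid_tmul] at h
  simpa using h

lemma csumR {ι : Type*} (x : A) (r : Coalgebra.Repr F x ι) :
    ∑ i ∈ r.index, Coalgebra.counit (R := F) (r.left i) • r.right i = x := by
  have h := congrArg (TensorProduct.lid F A) (Coalgebra.sum_counit_tmul_eq (R := F) r)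
  rw [map_sum] at h
  simp only [TensorProduct.lid_tmul] at h
  simpa using h

lemma antipode_one' : antipode (R := F) (1 : A) = 1 := by
  have h := mul_antipode_rTensor_comul_apply (R := F) (A := A) (a := 1)
  simpa [Algebra.TensorProduct.one_def] using h

lemma antipode_smul_one (r : F) :
    antipode (R := F) (algebraMap F A r) = algebraMap F A r := by
  rw [Algebra.algebraMap_eq_smul_one, map_smul, antipode_one']


lemma claimA {ι κ ι2 κ2 : Type*} (x y : A) (dx : Coalgebra.Repr F x ι)
    (dy : Coalgebra.Repr F y κ)
    (dx2 : ∀ i : ι, Coalgebra.Repr F (dx.right i) ι2)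
    (dy2 : ∀ j : κ, Coalgebra.Repr F (dy.right j) κ2) :
    ∑ i ∈ dx.index, ∑ k ∈ (dx2 i).index, ∑ j ∈ dy.index, ∑ l ∈ (dy2 j).index,
      antipode (R := F) (dx.left i * dy.left j) *
        (((dx2 i).left k * (dy2 j).left l) *
          (antipode (R := F) ((dy2 j).right l) * antipode (R := F) ((dx2 i).right k)))
    = antipode (R := F) (x * y) := by
  have step1 : ∀ i ∈ dx.index, ∀ k ∈ (dx2 i).index, ∀ j ∈ dy.index,
      ∑ l ∈ (dy2 j).index,
        antipode (R := F) (dx.left i * dy.left j) *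
          (((dx2 i).left k * (dy2 j).left l) *
            (antipode (R := F) ((dy2 j).right l) * antipode (R := F) ((dx2 i).right k)))
      = Coalgebra.counit (R := F) (dy.right j) •
          (antipode (R := F) (dx.left i * dy.left j) *
            ((dx2 i).left k * antipode (R := F) ((dx2 i).right k))) := by
    intro i _ k _ j _
    have h := sum_mul_antipode_eq_algebraMap_counit (R := F) (dy2 j)
    calc ∑ l ∈ (dy2 j).index,
          antipode (R := F) (dx.left i * dy.left j) *
            (((dx2 i).left k * (dy2 j).left l) *
              (antipode (R := F) ((dy2 j).right l) * antipode (R := F) ((dx2 i).right k)))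
        = antipode (R := F) (dx.left i * dy.left j) *
            ((dx2 i).left k *
              ((∑ l ∈ (dy2 j).index, (dy2 j).left l * antipode (R := F) ((dy2 j).right l)) *
                antipode (R := F) ((dx2 i).right k))) := by
          rw [Finset.sum_mul, Finset.mul_sum, Finset.mul_sum]
          refine Finset.sum_congr rfl fun l _ => congrArg _ ?_
          rw [mul_assoc ((dx2 i).left k), ← mul_assoc ((dy2 j).left l)]
      _ = Coalgebra.counit (R := F) (dy.right j) •
            (antipode (R := F) (dx.left i * dy.left j) *
              ((dx2 i).left k * antipode (R := F) ((dx2 i).right k))) := by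
          rw [h, ← Algebra.smul_def, mul_smul_comm, mul_smul_comm]
  calc ∑ i ∈ dx.index, ∑ k ∈ (dx2 i).index, ∑ j ∈ dy.index, ∑ l ∈ (dy2 j).index,
        antipode (R := F) (dx.left i * dy.left j) *
          (((dx2 i).left k * (dy2 j).left l) *
            (antipode (R := F) ((dy2 j).right l) * antipode (R := F) ((dx2 i).right k)))
      = ∑ i ∈ dx.index, ∑ j ∈ dy.index, ∑ k ∈ (dx2 i).index,
          Coalgebra.counit (R := F) (dy.right j) •
            (antipode (R := F) (dx.left i * dy.left j) *
              ((dx2 i).left k * antipode (R := F) ((dx2 i).right k))) := by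
        refine Finset.sum_congr rfl fun i hi => ?_
        rw [Finset.sum_comm]
        exact Finset.sum_congr rfl fun j hj => Finset.sum_congr rfl fun k hk =>
          step1 i hi k hk j hj
    _ = ∑ i ∈ dx.index, ∑ j ∈ dy.index,
          Coalgebra.counit (R := F) (dy.right j) •
            (Coalgebra.counit (R := F) (dx.right i) •
              antipode (R := F) (dx.left i * dy.left j)) := by
        refine Finset.sum_congr rfl fun i _ => Finset.sum_congr rfl fun j _ => ?_
        rw [← Finset.smul_sum, ← Finset.mul_sum, sum_mul_antipode_eq_algebraMap_counit (R := F) (dx2 i),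
          ← Algebra.commutes, ← Algebra.smul_def]
    _ = antipode (R := F) (x * y) := by
        conv_rhs => rw [← csumL x dx, ← csumL y dy]
        rw [Finset.sum_mul_sum, map_sum]
        refine Finset.sum_congr rfl fun i _ => ?_
        rw [map_sum]
        refine Finset.sum_congr rfl fun j _ => ?_
        rw [smul_mul_assoc, mul_smul_comm, map_smul, map_smul, smul_comm]

lemma claimB {ι κ ι1 κ1 : Type*} (x y : A) (dx : Coalgebra.Repr F x ι)
    (dy : Coalgebra.Repr F y κ)
    (dx1 : ∀ i : ι, Coalgebra.Repr F (dx.left i) ι1)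
    (dy1 : ∀ j : κ, Coalgebra.Repr F (dy.left j) κ1) :
    ∑ i ∈ dx.index, ∑ k ∈ (dx1 i).index, ∑ j ∈ dy.index, ∑ l ∈ (dy1 j).index,
      antipode (R := F) ((dx1 i).left k * (dy1 j).left l) *
        (((dx1 i).right k * (dy1 j).right l) *
          (antipode (R := F) (dy.right j) * antipode (R := F) (dx.right i)))
    = antipode (R := F) y * antipode (R := F) x := by
  have step1 : ∀ i ∈ dx.index, ∀ j ∈ dy.index,
      ∑ k ∈ (dx1 i).index, ∑ l ∈ (dy1 j).index,
        antipode (R := F) ((dx1 i).left k * (dy1 j).left l) *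
          (((dx1 i).right k * (dy1 j).right l) *
            (antipode (R := F) (dy.right j) * antipode (R := F) (dx.right i)))
      = (Coalgebra.counit (R := F) (dx.left i) * Coalgebra.counit (R := F) (dy.left j)) •
          (antipode (R := F) (dy.right j) * antipode (R := F) (dx.right i)) := by
    intro i _ j _
    have h := sum_antipode_mul_eq_algebraMap_counit (R := F) (mulRepr (dx.left i) (dy.left j) (dx1 i) (dy1 j))
    rw [Bialgebra.counit_mul] at h
    calc ∑ k ∈ (dx1 i).index, ∑ l ∈ (dy1 j).index,
          antipode (R := F) ((dx1 i).left k * (dy1 j).left l) *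
            (((dx1 i).right k * (dy1 j).right l) *
              (antipode (R := F) (dy.right j) * antipode (R := F) (dx.right i)))
        = (∑ k ∈ (dx1 i).index, ∑ l ∈ (dy1 j).index,
            antipode (R := F) ((dx1 i).left k * (dy1 j).left l) *
              ((dx1 i).right k * (dy1 j).right l)) *
            (antipode (R := F) (dy.right j) * antipode (R := F) (dx.right i)) := by
          rw [Finset.sum_mul]
          refine Finset.sum_congr rfl fun k _ => ?_
          rw [Finset.sum_mul]
          exact Finset.sum_congr rfl fun l _ => (mul_assoc _ _ _).symm
      _ = (Coalgebra.counit (R := F) (dx.left i) * Coalgebra.counit (R := F) (dy.left j)) •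
            (antipode (R := F) (dy.right j) * antipode (R := F) (dx.right i)) := by
          rw [← Finset.sum_product']
          simp only [mulRepr] at h
          rw [h, ← Algebra.smul_def]
  calc ∑ i ∈ dx.index, ∑ k ∈ (dx1 i).index, ∑ j ∈ dy.index, ∑ l ∈ (dy1 j).index,
        antipode (R := F) ((dx1 i).left k * (dy1 j).left l) *
          (((dx1 i).right k * (dy1 j).right l) *
            (antipode (R := F) (dy.right j) * antipode (R := F) (dx.right i)))
      = ∑ i ∈ dx.index, ∑ j ∈ dy.index,
          (Coalgebra.counit (R := F) (dx.left i) * Coalgebra.counit (R := F) (dy.left j)) •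
            (antipode (R := F) (dy.right j) * antipode (R := F) (dx.right i)) := by
        refine Finset.sum_congr rfl fun i hi => ?_
        rw [Finset.sum_comm]
        exact Finset.sum_congr rfl fun j hj => step1 i hi j hj
    _ = antipode (R := F) y * antipode (R := F) x := by
        conv_rhs => rw [← csumR x dx, ← csumR y dy]
        rw [map_sum, map_sum, Finset.sum_mul_sum, Finset.sum_comm]
        refine Finset.sum_congr rfl fun i _ => Finset.sum_congr rfl fun j _ => ?_
        rw [map_smul, map_smul, smul_mul_assoc, mul_smul_comm, smul_smul, mul_comm]


/-- The 6-linear gadget `((x1,x2,x3),(y1,y2,y3)) ↦ S(x1 y1) ((x2 y2)(S y3 S x3))`. -/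
def phi6 : (A ⊗[F] (A ⊗[F] A)) ⊗[F] (A ⊗[F] (A ⊗[F] A)) →ₗ[F] A :=
  LinearMap.mul' F A ∘ₗ
    (TensorProduct.map ((antipode (R := F)) ∘ₗ LinearMap.mul' F A)
      (LinearMap.mul' F A ∘ₗ
        (TensorProduct.map (LinearMap.mul' F A)
          (LinearMap.mul' F A ∘ₗ
            (TensorProduct.map (antipode (R := F) (A := A)) (antipode (R := F) (A := A))) ∘ₗ
            (TensorProduct.comm F A A).toLinearMap)) ∘ₗ
        (TensorProduct.tensorTensorTensorComm F A A A A).toLinearMap)) ∘ₗ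
    (TensorProduct.tensorTensorTensorComm F A (A ⊗[F] A) A (A ⊗[F] A)).toLinearMap

lemma phi6_tmul (x1 x2 x3 y1 y2 y3 : A) :
    phi6 (F := F) ((x1 ⊗ₜ (x2 ⊗ₜ x3)) ⊗ₜ (y1 ⊗ₜ (y2 ⊗ₜ y3))) =
      antipode (R := F) (x1 * y1) *
        ((x2 * y2) * (antipode (R := F) y3 * antipode (R := F) x3)) := by
  simp [phi6]

lemma antipode_mul' (x y : A) :
    antipode (R := F) (x * y) = antipode (R := F) y * antipode (R := F) x := by
  classical
  set dx := Coalgebra.Repr.arbitrary F x with hdx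
  set dy := Coalgebra.Repr.arbitrary F y with hdy
  set dx1 : ∀ i : A × A, Coalgebra.Repr F (dx.left i) (A × A) :=
    fun i => Coalgebra.Repr.arbitrary F _ with hdx1
  set dx2 : ∀ i : A × A, Coalgebra.Repr F (dx.right i) (A × A) :=
    fun i => Coalgebra.Repr.arbitrary F _ with hdx2
  set dy1 : ∀ j : A × A, Coalgebra.Repr F (dy.left j) (A × A) :=
    fun j => Coalgebra.Repr.arbitrary F _ with hdy1
  set dy2 : ∀ j : A × A, Coalgebra.Repr F (dy.right j) (A × A) :=
    fun j => Coalgebra.Repr.arbitrary F _ with hdy2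
  have hXa := Coalgebra.sum_tmul_tmul_eq (R := F) dx dx1 dx2
  have hXb := Coalgebra.sum_tmul_tmul_eq (R := F) dy dy1 dy2
  have key := congrArg₂ (fun u v => phi6 (F := F) (u ⊗ₜ[F] v)) hXa hXb
  simp only [TensorProduct.sum_tmul] at key
  simp only [TensorProduct.tmul_sum] at key
  simp only [map_sum, phi6_tmul] at key
  rw [claimA x y dx dy dx2 dy2, claimB x y dx dy dx1 dy1] at key
  exact key.symm


section Sinv

variable (hS : Function.Bijective (antipode (R := F) (A := A)))

/-- Inverse of the antipode. -/
def Sinv : A →ₗ[F] A :=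
  (LinearEquiv.ofBijective (antipode (R := F) (A := A)) hS).symm.toLinearMap

lemma S_Sinv (x : A) : antipode (R := F) (Sinv hS x) = x :=
  (LinearEquiv.ofBijective (antipode (R := F) (A := A)) hS).apply_symm_apply x

lemma Sinv_S (x : A) : Sinv hS (antipode (R := F) x) = x :=
  (LinearEquiv.ofBijective (antipode (R := F) (A := A)) hS).symm_apply_apply x

lemma Sinv_one : Sinv hS (1 : A) = 1 :=
  hS.injective (by rw [S_Sinv hS, antipode_one'])

lemma Sinv_mul (x y : A) : Sinv hS (x * y) = Sinv hS y * Sinv hS x :=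
  hS.injective (by rw [S_Sinv hS, antipode_mul', S_Sinv hS, S_Sinv hS])

lemma coopL (b : A) :
    LinearMap.mul' F A ((TensorProduct.map LinearMap.id (Sinv hS))
      ((TensorProduct.comm F A A) (Coalgebra.comul (R := F) b))) =
    algebraMap F A (Coalgebra.counit (R := F) b) := by
  have aux : ∀ u : A ⊗[F] A,
      antipode (R := F) (LinearMap.mul' F A ((TensorProduct.map LinearMap.id (Sinv hS))
        ((TensorProduct.comm F A A) u))) =
      LinearMap.mul' F A ((antipode (R := F) (A := A)).lTensor A u) := by
    intro u
    induction u using TensorProduct.induction_on with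
    | zero => simp
    | tmul p q => simp [antipode_mul', S_Sinv hS]
    | add u v hu hv => simp only [map_add, hu, hv]
  apply hS.injective
  rw [aux, mul_antipode_lTensor_comul_apply, antipode_smul_one]

lemma coopR (b : A) :
    LinearMap.mul' F A ((TensorProduct.map (Sinv hS) LinearMap.id)
      ((TensorProduct.comm F A A) (Coalgebra.comul (R := F) b))) =
    algebraMap F A (Coalgebra.counit (R := F) b) := by
  have aux : ∀ u : A ⊗[F] A,
      antipode (R := F) (LinearMap.mul' F A ((TensorProduct.map (Sinv hS) LinearMap.id)
        ((TensorProduct.comm F A A) u))) =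
      LinearMap.mul' F A ((antipode (R := F) (A := A)).rTensor A u) := by
    intro u
    induction u using TensorProduct.induction_on with
    | zero => simp
    | tmul p q => simp [antipode_mul', S_Sinv hS]
    | add u v hu hv => simp only [map_add, hu, hv]
  apply hS.injective
  rw [aux, mul_antipode_rTensor_comul_apply, antipode_smul_one]

end Sinv

end St10

end St10Section

set_option maxHeartbeats 2000000 in
set_option synthInstance.maxHeartbeats 400000 in
/-- crossing symmetry for a sovereign quasitriangular Hopf algebra:
`((((R_{V,W})⁻¹)^{t₂})⁻¹)^{t₂} = ((1 ⊗ D⁻¹) ⬝ R ⬝ (1 ⊗ D))_{V,W}`. -/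
theorem statement10 {F A : Type*} [Field F] [Ring A] [HopfAlgebra F A]
    (hS : Function.Bijective (HopfAlgebra.antipode (R := F) (A := A)))
    (R Ri : A ⊗[F] A) (hQT : IsQT F A R Ri)
    (D Di : A) (hD1 : D * Di = 1) (hD2 : Di * D = 1)
    (hDgl : cop F A D = D ⊗ₜ[F] D) (hDe : Bialgebra.counitAlgHom F A D = 1)
    (hDS : ∀ a : A, D * a * Di =
      HopfAlgebra.antipode (R := F) (HopfAlgebra.antipode (R := F) a))
    (V W : Type) [AddCommGroup V] [Module F V] [FiniteDimensional F V]
    [AddCommGroup W] [Module F W] [FiniteDimensional F W]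
    (ρV : A →ₐ[F] Module.End F V) (ρW : A →ₐ[F] Module.End F W) :
    IsUnit (pt2 F V W ((Algebra.TensorProduct.map ρV ρW) Ri)) ∧
    ddIdent F V W (pt2 F V (Module.Dual F W)
        (Ring.inverse (pt2 F V W ((Algebra.TensorProduct.map ρV ρW) Ri)))) =
      (Algebra.TensorProduct.map ρV ρW) (((1 : A) ⊗ₜ[F] Di) * R * ((1 : A) ⊗ₜ[F] D)) := by
  classical
  set SL : A →ₗ[F] A := HopfAlgebra.antipode (R := F) (A := A) with hSL
  set Si : A →ₗ[F] A := St10.Sinv hS with hSiDef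
  set eps : A →ₗ[F] A :=
    (Algebra.linearMap F A) ∘ₗ (Coalgebra.counit (R := F) (A := A)) with heps
  have heps' : ∀ b : A, eps b = algebraMap F A (Coalgebra.counit (R := F) b) := fun b => rfl
  -- `counit2r` computed via `lTensor counit`
  have hc2r : ∀ p q : A, counit2r F A (p ⊗ₜ[F] q) =
      Coalgebra.counit (R := F) q • p := by
    intro p q
    simp [counit2r, Algebra.TensorProduct.rid_tmul]
  have hcop : ∀ b : A, cop F A b = Coalgebra.comul (R := F) b := fun b => rfl
  have hcounit2r_cop : ∀ b : A, counit2r F A (cop F A b) = b := by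
    intro b
    have haux : ∀ w : A ⊗[F] A,
        counit2r F A w =
          TensorProduct.rid F A ((Coalgebra.counit (R := F) (A := A)).lTensor A w) := by
      intro w
      induction w using TensorProduct.induction_on with
      | zero => simp
      | tmul p q => simp [hc2r]
      | add p q hp hq => simp only [map_add, hp, hq]
    rw [hcop, haux, Coalgebra.lTensor_counit_comul]
    simp
  -- the partial counit identity `(id ⊗ ε)(R) = 1`
  set q2 : A ⊗[F] (A ⊗[F] A) →ₐ[F] A ⊗[F] A :=
    Algebra.TensorProduct.map (AlgHom.id F A) (counit2r F A) with hq2def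
  have hq1 : ∀ u : A ⊗[F] A, q2 (cop23 F A u) = u := by
    intro u
    induction u using TensorProduct.induction_on with
    | zero => simp
    | tmul a b => simp [hq2def, cop23, hcounit2r_cop]
    | add u v hu hv => simp only [map_add, hu, hv]
  have hq13 : ∀ u : A ⊗[F] A, q2 (i13 F A u) = (TensorProduct.map LinearMap.id eps) u := by
    intro u
    induction u using TensorProduct.induction_on with
    | zero => simp
    | tmul a b =>
        simp [hq2def, i13, hc2r, heps', Algebra.algebraMap_eq_smul_one]
    | add u v hu hv => simp only [map_add, hu, hv]
  have hq12 : ∀ u : A ⊗[F] A, q2 (i12 F A u) = u := by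
    intro u
    induction u using TensorProduct.induction_on with
    | zero => simp
    | tmul a b => simp [hq2def, i12, hc2r]
    | add u v hu hv => simp only [map_add, hu, hv]
  have h1 : R = (TensorProduct.map LinearMap.id eps) R * R := by
    have h := congrArg q2 hQT.copR
    rw [hq1, map_mul, hq13, hq12] at h
    exact h
  have hce : (TensorProduct.map LinearMap.id eps) R = 1 := by
    calc (TensorProduct.map LinearMap.id eps) R
        = (TensorProduct.map LinearMap.id eps) R * (R * Ri) := by
          rw [hQT.mulInv, mul_one]
      _ = ((TensorProduct.map LinearMap.id eps) R * R) * Ri := (mul_assoc _ _ _).symm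
      _ = R * Ri := by rw [← h1]
      _ = 1 := hQT.mulInv
  -- the maps used to contract the third leg
  set g : A ⊗[F] A →ₗ[F] A :=
    LinearMap.mul' F A ∘ₗ (TensorProduct.map LinearMap.id Si) ∘ₗ
      (TensorProduct.comm F A A).toLinearMap with hgdef
  set g' : A ⊗[F] A →ₗ[F] A :=
    LinearMap.mul' F A ∘ₗ (TensorProduct.map Si LinearMap.id) ∘ₗ
      (TensorProduct.comm F A A).toLinearMap with hg'def
  have hgt : ∀ p q : A, g (p ⊗ₜ[F] q) = q * Si p := by intro p q; simp [hgdef]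
  have hg't : ∀ p q : A, g' (p ⊗ₜ[F] q) = Si q * p := by intro p q; simp [hg'def]
  have hgco : ∀ b : A, g (Coalgebra.comul (R := F) b) =
      algebraMap F A (Coalgebra.counit (R := F) b) := by
    intro b
    have := St10.coopL hS b
    simpa [hgdef] using this
  have hg'co : ∀ b : A, g' (Coalgebra.comul (R := F) b) =
      algebraMap F A (Coalgebra.counit (R := F) b) := by
    intro b
    have := St10.coopR hS b
    simpa [hg'def] using this
  have hL1 : ∀ u : A ⊗[F] A,
      (TensorProduct.map LinearMap.id g) (cop23 F A u) =
        (TensorProduct.map LinearMap.id eps) u := by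
    intro u
    induction u using TensorProduct.induction_on with
    | zero => simp
    | tmul a b => simp [cop23, hcop, hgco, heps']
    | add u v hu hv => simp only [map_add, hu, hv]
  have hL1' : ∀ u : A ⊗[F] A,
      (TensorProduct.map LinearMap.id g') (cop23 F A u) =
        (TensorProduct.map LinearMap.id eps) u := by
    intro u
    induction u using TensorProduct.induction_on with
    | zero => simp
    | tmul a b => simp [cop23, hcop, hg'co, heps']
    | add u v hu hv => simp only [map_add, hu, hv]
  have hL2 : ∀ u v : A ⊗[F] A,
      (TensorProduct.map LinearMap.id g) (i13 F A u * i12 F A v) =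
        u * (TensorProduct.map LinearMap.id Si) v := by
    intro u v
    induction u using TensorProduct.induction_on with
    | zero => simp
    | add p q hp hq => simp only [map_add, add_mul, hp, hq]
    | tmul a b =>
        induction v using TensorProduct.induction_on with
        | zero => simp
        | add p q hp hq => simp only [map_add, mul_add, hp, hq]
        | tmul c d =>
            simp [i13, i12, Algebra.TensorProduct.tmul_mul_tmul, hgt]
  have hL2' : ∀ u v : A ⊗[F] A,
      (TensorProduct.map LinearMap.id g') (i13 F A u * i12 F A v) =
        (TensorProduct.map LinearMap.id Si) u * v := by
    intro u v
    induction u using TensorProduct.induction_on with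
    | zero => simp
    | add p q hp hq => simp only [map_add, add_mul, hp, hq]
    | tmul a b =>
        induction v using TensorProduct.induction_on with
        | zero => simp
        | add p q hp hq => simp only [map_add, mul_add, hp, hq]
        | tmul c d =>
            simp [i13, i12, Algebra.TensorProduct.tmul_mul_tmul, hg't]
  have hN1 : R * (TensorProduct.map LinearMap.id Si) R = 1 := by
    have h := congrArg (TensorProduct.map LinearMap.id g) hQT.copR
    rw [hL1, hL2, hce] at h
    exact h.symm
  have hN2 : (TensorProduct.map LinearMap.id Si) R * R = 1 := by
    have h := congrArg (TensorProduct.map LinearMap.id g') hQT.copR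
    rw [hL1', hL2', hce] at h
    exact h.symm
  have hRiEq : Ri = (TensorProduct.map LinearMap.id Si) R := by
    calc Ri = 1 * Ri := (one_mul Ri).symm
      _ = ((TensorProduct.map LinearMap.id Si) R * R) * Ri := by rw [hN2]
      _ = (TensorProduct.map LinearMap.id Si) R * (R * Ri) := mul_assoc _ _ _
      _ = (TensorProduct.map LinearMap.id Si) R := by rw [hQT.mulInv, mul_one]
  -- conjugation by the sovereign element is the inverse square of the antipode
  have hDiD : ∀ bb : A, Di * bb * D = Si (Si bb) := by
    intro bb
    have h := hDS (Si (Si bb))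
    rw [hSiDef] at h
    rw [St10.S_Sinv hS, St10.S_Sinv hS] at h
    rw [← hSiDef] at h
    conv_lhs => rw [← h]
    simp only [← mul_assoc]
    rw [hD2, one_mul, mul_assoc, hD2, mul_one]
  have hX : ((1:A) ⊗ₜ[F] Di) * R * ((1:A) ⊗ₜ[F] D) =
      (TensorProduct.map LinearMap.id Si) Ri := by
    rw [hRiEq]
    have haux : ∀ u : A ⊗[F] A, ((1:A) ⊗ₜ[F] Di) * u * ((1:A) ⊗ₜ[F] D) =
        (TensorProduct.map LinearMap.id Si) ((TensorProduct.map LinearMap.id Si) u) := by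
      intro u
      induction u using TensorProduct.induction_on with
      | zero => simp
      | tmul a b => simp [Algebra.TensorProduct.tmul_mul_tmul, hDiD]
      | add u v hu hv => simp only [map_add, mul_add, add_mul, hu, hv]
    exact haux R
  -- the transposed representation
  have hSi1 : Si (1 : A) = 1 := St10.Sinv_one hS
  have hSimul : ∀ x y : A, Si (x * y) = Si y * Si x := St10.Sinv_mul hS
  have hSSi : ∀ x : A, SL (Si x) = x := St10.S_Sinv hS
  have hSiS : ∀ x : A, Si (SL x) = x := St10.Sinv_S hS
  set tW : Module.End F W →ₗ[F] Module.End F (Module.Dual F W) :=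
    Module.Dual.transpose (R := F) (M := W) (M' := W) with htW
  set rdag : A →ₐ[F] Module.End F (Module.Dual F W) := AlgHom.ofLinearMap
    (tW ∘ₗ ρW.toLinearMap ∘ₗ Si)
    (by
      simp only [LinearMap.coe_comp, Function.comp_apply, AlgHom.toLinearMap_apply]
      rw [hSi1, map_one]
      refine LinearMap.ext fun φ => ?_
      rw [htW, Module.Dual.transpose_apply]
      exact LinearMap.comp_id φ)
    (by
      intro x y
      simp only [LinearMap.coe_comp, Function.comp_apply, AlgHom.toLinearMap_apply]
      rw [hSimul, map_mul, Module.End.mul_eq_comp, htW, Module.Dual.transpose_comp,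
        ← Module.End.mul_eq_comp]) with hrdag
  have hrdagapp : ∀ a : A, rdag a = tW (ρW (Si a)) := by
    intro a; rw [hrdag]; rfl
  set Lam : (A ⊗[F] A) →ₐ[F] (Module.End F V ⊗[F] Module.End F (Module.Dual F W)) :=
    Algebra.TensorProduct.map ρV rdag with hLam
  have hpt : ∀ u : A ⊗[F] A,
      pt2 F V W ((Algebra.TensorProduct.map ρV ρW) u) =
        Lam ((TensorProduct.map LinearMap.id SL) u) := by
    intro u
    induction u using TensorProduct.induction_on with
    | zero => simp
    | tmul a b => simp [pt2, hLam, hrdagapp, hSiS, htW]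
    | add u v hu hv => simp only [map_add, hu, hv]
  have hcancelS : ∀ u : A ⊗[F] A,
      (TensorProduct.map LinearMap.id SL) ((TensorProduct.map LinearMap.id Si) u) = u := by
    intro u
    induction u using TensorProduct.induction_on with
    | zero => simp
    | tmul a b => simp [hSSi]
    | add u v hu hv => simp only [map_add, hu, hv]
  have hR1 : pt2 F V W ((Algebra.TensorProduct.map ρV ρW) Ri) = Lam R := by
    rw [hpt, hRiEq, hcancelS]
  have hR2 : pt2 F V W ((Algebra.TensorProduct.map ρV ρW)
      (((1:A) ⊗ₜ[F] Di) * R * ((1:A) ⊗ₜ[F] D))) = Lam Ri := by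
    rw [hpt, hX, hcancelS]
  have hu1 : Lam R * Lam Ri = 1 := by rw [← map_mul, hQT.mulInv, map_one]
  have hu2 : Lam Ri * Lam R = 1 := by rw [← map_mul, hQT.invMul, map_one]
  have hdd : ∀ Y : Module.End F V ⊗[F] Module.End F W,
      ddIdent F V W (pt2 F V (Module.Dual F W) (pt2 F V W Y)) = Y := by
    intro Y
    induction Y using TensorProduct.induction_on with
    | zero => simp
    | tmul f gg =>
        have hconj : (Module.evalEquiv F W).conj gg =
            Module.Dual.transpose (R := F)
              (Module.Dual.transpose (R := F) gg) := by
          refine LinearMap.ext fun Φ => LinearMap.ext fun ψ => ?_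
          rw [LinearEquiv.conj_apply]
          simp only [LinearMap.coe_comp, Function.comp_apply, LinearEquiv.coe_coe,
            Module.Dual.transpose_apply]
          exact Module.apply_evalEquiv_symm_apply F W (ψ ∘ₗ gg) Φ
        simp only [pt2, ddIdent, TensorProduct.map_tmul, LinearMap.id_coe, id_eq]
        rw [← hconj]
        simp
    | add u v hu hv => simp only [map_add, hu, hv]
  constructor
  · rw [hR1]
    exact ⟨⟨Lam R, Lam Ri, hu1, hu2⟩, rfl⟩
  · have hinv : Ring.inverse (pt2 F V W ((Algebra.TensorProduct.map ρV ρW) Ri)) =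
        pt2 F V W ((Algebra.TensorProduct.map ρV ρW)
          (((1:A) ⊗ₜ[F] Di) * R * ((1:A) ⊗ₜ[F] D))) := by
      rw [hR1, hR2]
      exact Ring.inverse_unit ⟨Lam R, Lam Ri, hu1, hu2⟩
    rw [hinv]
    exact hdd _


end
end
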